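/- For every n ≥ 3, the star with one extra edge S⁺ₙ (obtained from the star K_{1,n−1} by adding one edge between two leaves) has second largest distance eigenvalue less than -1/2. -/

import Mathlib

open Real

/-- The `k`-th largest eigenvalue (1-indexed, with multiplicity) of a real
symmetric matrix; junk value `0` if the matrix is not Hermitian. -/
noncomputable def kthLargestEig {V : Type*} [Fintype V] [DecidableEq V]
    (k : ℕ) (A : Matrix V V ℝ) : ℝ :=
  if h : A.IsHermitian then
    ((Finset.univ.val.map h.eigenvalues).sort (· ≤ ·)).getD (Fintype.card V - k) 0
  else 0

/-- The second largest eigenvalue of a real symmetric matrix. -/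
noncomputable def lambda2 {V : Type*} [Fintype V] [DecidableEq V]
    (A : Matrix V V ℝ) : ℝ := kthLargestEig 2 A

/-- The distance matrix of a graph (entries are graph distances, as reals). -/
noncomputable def distMatrix {V : Type*} [Fintype V] (G : SimpleGraph V) :
    Matrix V V ℝ := fun u v => (G.dist u v : ℝ)

/-- A graph is chordal if every cycle of length at least 4 has a chord, i.e. an
edge of the graph joining two vertices of the cycle that is not a cycle edge. -/
def SimpleGraph.Chordal {V : Type*} (G : SimpleGraph V) : Prop :=
  ∀ (u : V) (w : G.Walk u u), w.IsCycle → 4 ≤ w.length →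
    ∃ x y, x ∈ w.support ∧ y ∈ w.support ∧ G.Adj x y ∧ s(x, y) ∉ w.edges

/-- `S⁺ₙ`: the star `K_{1,n-1}` with center `0` and leaves `1, …, n-1`,
together with the extra edge joining the leaves `1` and `2`. -/
def SplusStar (n : ℕ) : SimpleGraph (Fin n) where
  Adj x y := x ≠ y ∧
    ((x : ℕ) = 0 ∨ (y : ℕ) = 0 ∨ ((x : ℕ) ≤ 2 ∧ (y : ℕ) ≤ 2))
  symm := by
    constructor
    intro x y h
    exact ⟨h.1.symm, by tauto⟩
  loopless := by
    constructor
    intro x h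
    exact h.1 rfl

namespace SplusAux
open Matrix

variable {n : ℕ}

/-- explicit entry description of the distance matrix -/
noncomputable def E (n : ℕ) : Matrix (Fin n) (Fin n) ℝ := fun u v =>
  2 - (if u = v then 2 else 0)
    - (if (u : ℕ) = 0 ∧ v ≠ u then 1 else 0)
    - (if (v : ℕ) = 0 ∧ u ≠ v then 1 else 0)
    - (if ((u : ℕ) = 1 ∧ (v : ℕ) = 2) ∨ ((u : ℕ) = 2 ∧ (v : ℕ) = 1) then 1 else 0)

instance adjDec : DecidableRel (SplusStar n).Adj :=
  fun u v => inferInstanceAs (Decidable (u ≠ v ∧ _))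

lemma adj_iff (u v : Fin n) : (SplusStar n).Adj u v ↔ u ≠ v ∧
    ((u : ℕ) = 0 ∨ (v : ℕ) = 0 ∨ ((u : ℕ) ≤ 2 ∧ (v : ℕ) ≤ 2)) := Iff.rfl

lemma dist_eq (hn : 3 ≤ n) (u v : Fin n) :
    (SplusStar n).dist u v = if u = v then 0 else
      if (SplusStar n).Adj u v then 1 else 2 := by
  by_cases huv : u = v
  · simp [huv]
  by_cases hadj : (SplusStar n).Adj u v
  · simp [huv, hadj, SimpleGraph.dist_eq_one_iff_adj]
  · -- both u and v are nonzero, non-adjacent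
    have hu0 : (u : ℕ) ≠ 0 := by
      intro h; exact hadj ⟨huv, Or.inl h⟩
    have hv0 : (v : ℕ) ≠ 0 := by
      intro h; exact hadj ⟨huv, Or.inr (Or.inl h)⟩
    have hz : (((⟨0, by omega⟩ : Fin n) : ℕ)) = 0 := rfl
    have h1 : (SplusStar n).Adj u ⟨0, by omega⟩ := by
      refine ⟨?_, Or.inr (Or.inl rfl)⟩
      intro h; exact hu0 (by simpa [Fin.ext_iff] using h)
    have h2 : (SplusStar n).Adj (⟨0, by omega⟩ : Fin n) v := by
      refine ⟨?_, Or.inl rfl⟩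
      intro h; exact hv0 (by simpa [Fin.ext_iff] using h.symm)
    have hw : (SplusStar n).Walk u v :=
      SimpleGraph.Walk.cons h1 (SimpleGraph.Walk.cons h2 SimpleGraph.Walk.nil)
    have hle : (SplusStar n).dist u v ≤ 2 := by
      have := SimpleGraph.dist_le
        (SimpleGraph.Walk.cons h1 (SimpleGraph.Walk.cons h2 SimpleGraph.Walk.nil))
      simpa using this
    have hne0 : (SplusStar n).dist u v ≠ 0 :=
      fun h => huv ((SimpleGraph.Reachable.dist_eq_zero_iff ⟨hw⟩).mp h)
    have hne1 : (SplusStar n).dist u v ≠ 1 :=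
      fun h => hadj (SimpleGraph.dist_eq_one_iff_adj.mp h)
    simp only [huv, hadj, if_false]
    omega

lemma distMatrix_eq (hn : 3 ≤ n) : distMatrix (SplusStar n) = E n := by
  funext u v
  rw [show distMatrix (SplusStar n) u v = ((SplusStar n).dist u v : ℝ) from rfl,
    dist_eq hn u v]
  simp only [E]
  by_cases huv : u = v
  · subst huv
    have h3 : ¬(((u : ℕ) = 1 ∧ (u : ℕ) = 2) ∨ ((u : ℕ) = 2 ∧ (u : ℕ) = 1)) := by omega
    simp [h3]
  · by_cases hadj : (SplusStar n).Adj u v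
    · obtain ⟨-, hcl⟩ := hadj
      have hAdj : (SplusStar n).Adj u v := ⟨huv, hcl⟩
      simp only [huv, if_false, hAdj, if_true, Nat.cast_one]
      have hvu : (u : ℕ) ≠ (v : ℕ) := fun h => huv (Fin.ext h)
      by_cases hu0 : (u : ℕ) = 0
      · have hv0 : (v : ℕ) ≠ 0 := by omega
        rw [if_pos ⟨hu0, fun h => huv h.symm⟩, if_neg (by tauto), if_neg (by omega)]
        norm_num
      · by_cases hv0 : (v : ℕ) = 0
        · rw [if_neg (by tauto), if_pos ⟨hv0, huv⟩, if_neg (by omega)]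
          norm_num
        · have h12 : ((u : ℕ) = 1 ∧ (v : ℕ) = 2) ∨ ((u : ℕ) = 2 ∧ (v : ℕ) = 1) := by
            rcases hcl with h | h | h <;> omega
          rw [if_neg (by tauto), if_neg (by tauto), if_pos h12]
          norm_num
    · have hu0 : (u : ℕ) ≠ 0 := fun h => hadj ⟨huv, Or.inl h⟩
      have hv0 : (v : ℕ) ≠ 0 := fun h => hadj ⟨huv, Or.inr (Or.inl h)⟩
      have h3 : ¬(((u : ℕ) = 1 ∧ (v : ℕ) = 2) ∨ ((u : ℕ) = 2 ∧ (v : ℕ) = 1)) := by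
        intro h
        exact hadj ⟨huv, Or.inr (Or.inr (by omega))⟩
      simp only [huv, if_false, hadj]
      rw [if_neg (by tauto), if_neg (by tauto), if_neg h3]
      norm_num

section quad

/-- the weight vector `(1,2,2,…,2)` -/
def w (n : ℕ) : Fin n → ℝ := fun v => if (v : ℕ) = 0 then 1 else 2

lemma sum_ite_val (k : ℕ) (hk : k < n) (g : Fin n → ℝ) :
    (∑ v : Fin n, if (v : ℕ) = k then g v else 0) = g ⟨k, hk⟩ := by
  have h : ∀ v : Fin n, (if (v : ℕ) = k then g v else 0)
      = (if v = ⟨k, hk⟩ then g v else 0) := by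
    intro v
    by_cases h : (v : ℕ) = k
    · rw [if_pos h, if_pos (Fin.ext h)]
    · rw [if_neg h, if_neg (fun hh => h (by rw [hh]))]
  rw [Finset.sum_congr rfl (fun v _ => h v)]
  simpa using Finset.sum_ite_eq' Finset.univ (⟨k, hk⟩ : Fin n) g

lemma quad_neg (hn : 3 ≤ n) (x : Fin n → ℝ) (hx : x ≠ 0)
    (hw : (∑ v, w n v * x v) = 0) :
    2 * (x ⬝ᵥ (distMatrix (SplusStar n) *ᵥ x)) + x ⬝ᵥ x < 0 := by
  classical
  have h0 : (0 : ℕ) < n := by omega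
  have h1 : (1 : ℕ) < n := by omega
  have h2 : (2 : ℕ) < n := by omega
  set z : Fin n := ⟨0, h0⟩ with hzdef
  set a : Fin n := ⟨1, h1⟩ with hadef
  set b : Fin n := ⟨2, h2⟩ with hbdef
  set s : ℝ := ∑ v, x v with hs
  set q : ℝ := ∑ v, (x v) ^ 2 with hq
  rw [distMatrix_eq hn]
  -- row computation
  have row : ∀ u : Fin n, (E n *ᵥ x) u =
      2 * s - 2 * x u - (if (u : ℕ) = 0 then s - x u else 0)
        - (if (u : ℕ) ≠ 0 then x z else 0)
        - (if (u : ℕ) = 1 then x b else 0)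
        - (if (u : ℕ) = 2 then x a else 0) := by
    intro u
    have : (E n *ᵥ x) u = ∑ v, E n u v * x v := rfl
    rw [this]
    have expand : ∀ v : Fin n, E n u v * x v =
        2 * x v - (if v = u then 2 * x v else 0)
          - (if (u : ℕ) = 0 then (if v = u then 0 else x v) else 0)
          - (if (u : ℕ) ≠ 0 then (if (v : ℕ) = 0 then x v else 0) else 0)
          - (if (u : ℕ) = 1 then (if (v : ℕ) = 2 then x v else 0) else 0)
          - (if (u : ℕ) = 2 then (if (v : ℕ) = 1 then x v else 0) else 0) := by
      intro v
      simp only [E]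
      rw [sub_mul, sub_mul, sub_mul, sub_mul]
      have t1 : (if u = v then (2:ℝ) else 0) * x v = (if v = u then 2 * x v else 0) := by
        by_cases h : v = u
        · simp [h]
        · have h' : ¬u = v := fun hh => h hh.symm
          simp [h, h']
      have t2 : (if (u : ℕ) = 0 ∧ v ≠ u then (1:ℝ) else 0) * x v
          = (if (u : ℕ) = 0 then (if v = u then 0 else x v) else 0) := by
        by_cases h1 : (u : ℕ) = 0 <;> by_cases h2 : v = u <;> simp [h1, h2]
      have t3 : (if (v : ℕ) = 0 ∧ u ≠ v then (1:ℝ) else 0) * x v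
          = (if (u : ℕ) ≠ 0 then (if (v : ℕ) = 0 then x v else 0) else 0) := by
        by_cases h1 : (v : ℕ) = 0 <;> by_cases h2 : (u : ℕ) = 0
        · have huv : u = v := Fin.ext (by omega)
          simp [h1, h2, huv]
        · have huv : u ≠ v := fun h => h2 (by rw [h]; exact h1)
          simp [h1, h2, huv]
        · simp [h1, h2]
        · simp [h1, h2]
      have t4 : (if ((u : ℕ) = 1 ∧ (v : ℕ) = 2) ∨ ((u : ℕ) = 2 ∧ (v : ℕ) = 1)
            then (1:ℝ) else 0) * x v
          = (if (u : ℕ) = 1 then (if (v : ℕ) = 2 then x v else 0) else 0)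
            + (if (u : ℕ) = 2 then (if (v : ℕ) = 1 then x v else 0) else 0) := by
        by_cases h1 : (u : ℕ) = 1 <;> by_cases h2 : (u : ℕ) = 2 <;>
          by_cases h3 : (v : ℕ) = 1 <;> by_cases h4 : (v : ℕ) = 2 <;>
          simp [h1, h2, h3, h4] <;> omega
      rw [t1, t2, t3, t4]
      ring
    rw [Finset.sum_congr rfl (fun v _ => expand v)]
    simp only [Finset.sum_sub_distrib]
    have e1 : (∑ v : Fin n, 2 * x v) = 2 * s := by rw [hs, Finset.mul_sum]
    have e2 : (∑ v : Fin n, if v = u then 2 * x v else 0) = 2 * x u := by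
      simpa using Finset.sum_ite_eq' Finset.univ u (fun t => 2 * x t)
    have e3 : (∑ v : Fin n, if (u : ℕ) = 0 then (if v = u then 0 else x v) else 0)
        = (if (u : ℕ) = 0 then s - x u else 0) := by
      by_cases hu0 : (u : ℕ) = 0
      · simp only [hu0, if_true]
        have : ∀ v : Fin n, (if v = u then 0 else x v) = x v - (if v = u then x v else 0) := by
          intro v; by_cases h : v = u <;> simp [h]
        rw [Finset.sum_congr rfl (fun v _ => this v), Finset.sum_sub_distrib,
          Finset.sum_ite_eq' Finset.univ u]
        simp [hs]
      · simp [hu0]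
    have e4 : (∑ v : Fin n, if (u : ℕ) ≠ 0 then (if (v : ℕ) = 0 then x v else 0) else 0)
        = (if (u : ℕ) ≠ 0 then x z else 0) := by
      by_cases hu0 : (u : ℕ) = 0
      · simp [hu0]
      · simp only [hu0, ne_eq, not_false_eq_true, if_true]
        exact sum_ite_val 0 h0 x
    have e5 : (∑ v : Fin n, if (u : ℕ) = 1 then (if (v : ℕ) = 2 then x v else 0) else 0)
        = (if (u : ℕ) = 1 then x b else 0) := by
      by_cases hu1 : (u : ℕ) = 1
      · simp only [hu1, if_true]; exact sum_ite_val 2 h2 x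
      · simp [hu1]
    have e6 : (∑ v : Fin n, if (u : ℕ) = 2 then (if (v : ℕ) = 1 then x v else 0) else 0)
        = (if (u : ℕ) = 2 then x a else 0) := by
      by_cases hu2 : (u : ℕ) = 2
      · simp only [hu2, if_true]; exact sum_ite_val 1 h1 x
      · simp [hu2]
    rw [e1, e2, e3, e4, e5, e6]
  have quad : x ⬝ᵥ (E n *ᵥ x) =
      2 * s ^ 2 - 2 * q - 2 * x z * (s - x z) - 2 * x a * x b := by
    have : x ⬝ᵥ (E n *ᵥ x) = ∑ u, x u * (E n *ᵥ x) u := rfl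
    rw [this, Finset.sum_congr rfl (fun u _ => by rw [row u])]
    have expand : ∀ u : Fin n,
        x u * (2 * s - 2 * x u - (if (u : ℕ) = 0 then s - x u else 0)
          - (if (u : ℕ) ≠ 0 then x z else 0)
          - (if (u : ℕ) = 1 then x b else 0)
          - (if (u : ℕ) = 2 then x a else 0)) =
        2 * s * x u - 2 * (x u) ^ 2 - (if (u : ℕ) = 0 then x u * (s - x u) else 0)
          - (x u * x z - (if (u : ℕ) = 0 then x u * x z else 0))
          - (if (u : ℕ) = 1 then x u * x b else 0)
          - (if (u : ℕ) = 2 then x u * x a else 0) := by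
      intro u
      by_cases hu0 : (u : ℕ) = 0 <;> by_cases hu1 : (u : ℕ) = 1 <;>
        by_cases hu2 : (u : ℕ) = 2 <;> simp_all <;> ring
    rw [Finset.sum_congr rfl (fun u _ => expand u)]
    simp only [Finset.sum_sub_distrib]
    have e1 : (∑ u : Fin n, 2 * s * x u) = 2 * s * s := by
      rw [← Finset.mul_sum, ← hs]
    have e2 : (∑ u : Fin n, 2 * (x u) ^ 2) = 2 * q := by
      rw [← Finset.mul_sum, ← hq]
    have e3 : (∑ u : Fin n, if (u : ℕ) = 0 then x u * (s - x u) else 0)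
        = x z * (s - x z) := sum_ite_val 0 h0 _
    have e4 : (∑ u : Fin n, x u * x z) = s * x z := by
      rw [← Finset.sum_mul, ← hs]
    have e5 : (∑ u : Fin n, if (u : ℕ) = 0 then x u * x z else 0) = x z * x z :=
      sum_ite_val 0 h0 _
    have e6 : (∑ u : Fin n, if (u : ℕ) = 1 then x u * x b else 0) = x a * x b :=
      sum_ite_val 1 h1 _
    have e7 : (∑ u : Fin n, if (u : ℕ) = 2 then x u * x a else 0) = x b * x a :=
      sum_ite_val 2 h2 _
    rw [e1, e2, e3, e4, e5, e6, e7]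
    ring
  -- the hyperplane condition gives x z = 2 s
  have hwz : x z = 2 * s := by
    have : (∑ v, w n v * x v) = 2 * s - x z := by
      have : ∀ v : Fin n, w n v * x v = 2 * x v - (if (v : ℕ) = 0 then x v else 0) := by
        intro v
        simp only [w]
        by_cases h : (v : ℕ) = 0 <;> simp [h] <;> ring
      rw [Finset.sum_congr rfl (fun v _ => this v), Finset.sum_sub_distrib,
        sum_ite_val 0 h0 x, ← Finset.mul_sum, ← hs]
    rw [this] at hw
    linarith
  -- q' : sum of squares over nonzero vertices
  set q' : ℝ := ∑ v ∈ Finset.univ.erase z, (x v) ^ 2 with hq'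
  have hqsplit : q = x z ^ 2 + q' := by
    rw [hq, hq', ← Finset.add_sum_erase Finset.univ _ (Finset.mem_univ z)]
  have hab : x a ^ 2 + x b ^ 2 ≤ q' := by
    have hsub : ({a, b} : Finset (Fin n)) ⊆ Finset.univ.erase z := by
      intro t ht
      simp only [Finset.mem_insert, Finset.mem_singleton] at ht
      rcases ht with rfl | rfl <;>
        · refine Finset.mem_erase.mpr ⟨?_, Finset.mem_univ _⟩
          simp [hzdef, hadef, hbdef, Fin.ext_iff]
    have hne : a ≠ b := by simp [hadef, hbdef, Fin.ext_iff]
    calc x a ^ 2 + x b ^ 2 = ∑ v ∈ ({a, b} : Finset (Fin n)), (x v) ^ 2 := by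
          rw [Finset.sum_pair hne]
      _ ≤ q' := Finset.sum_le_sum_of_subset_of_nonneg hsub
          (fun t _ _ => sq_nonneg _)
  have hq'pos : 0 < q' := by
    rcases lt_or_eq_of_le (Finset.sum_nonneg (fun t _ => sq_nonneg (x t)) : (0:ℝ) ≤ q') with h | h
    · exact h
    · exfalso
      have hall : ∀ v ∈ Finset.univ.erase z, (x v) ^ 2 = 0 := by
        intro v hv
        have := (Finset.sum_eq_zero_iff_of_nonneg (fun t _ => sq_nonneg (x t))).mp h.symm
        exact this v hv
      have hx0 : ∀ v : Fin n, v ≠ z → x v = 0 := by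
        intro v hv
        have := hall v (Finset.mem_erase.mpr ⟨hv, Finset.mem_univ v⟩)
        exact pow_eq_zero_iff (by norm_num) |>.mp this
      have hsz : s = x z := by
        rw [hs, ← Finset.add_sum_erase Finset.univ _ (Finset.mem_univ z)]
        rw [Finset.sum_eq_zero (fun v hv => hx0 v (Finset.mem_erase.mp hv).1)]
        ring
      have : x z = 0 := by rw [hwz, hsz] at *; linarith [hwz.symm.trans (by rw [hsz])]
      apply hx
      funext v
      by_cases hv : v = z
      · rw [hv]; exact this
      · exact hx0 v hv
  have hdq : x ⬝ᵥ x = q := by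
    simp only [dotProduct, hq]
    exact Finset.sum_congr rfl (fun v _ => (sq (x v)).symm)
  rw [quad, hdq, hqsplit, hwz]
  nlinarith [sq_nonneg (x a + x b), hab, hq'pos]

end quad

end SplusAux

open Matrix
theorem lambda2_Splus (n : ℕ) (hn : 3 ≤ n) :
    lambda2 (distMatrix (SplusStar n)) < -1/2 := by
  classical
  set D := distMatrix (SplusStar n) with hD
  have hHerm : D.IsHermitian := by
    rw [Matrix.IsHermitian]
    ext u v
    simp [Matrix.conjTranspose_apply, hD, distMatrix, SimpleGraph.dist_comm]
  -- key claim: at most one eigenvalue is ≥ -1/2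
  have key : ∀ i j : Fin n, i ≠ j → -1/2 ≤ hHerm.eigenvalues i →
      -1/2 ≤ hHerm.eigenvalues j → False := by
    intro i j hij hi hj
    set ui : Fin n → ℝ := ⇑(hHerm.eigenvectorBasis i) with hui
    set uj : Fin n → ℝ := ⇑(hHerm.eigenvectorBasis j) with huj
    have hmuli : D *ᵥ ui = hHerm.eigenvalues i • ui := hHerm.mulVec_eigenvectorBasis i
    have hmulj : D *ᵥ uj = hHerm.eigenvalues j • uj := hHerm.mulVec_eigenvectorBasis j
    have horth := hHerm.eigenvectorBasis.orthonormal
    have hii : ui ⬝ᵥ ui = 1 := by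
      have h1 := horth.1 i
      have : (inner ℝ (hHerm.eigenvectorBasis i) (hHerm.eigenvectorBasis i) : ℝ) = 1 := by
        rw [real_inner_self_eq_norm_sq, h1]; norm_num
      rw [PiLp.inner_apply] at this
      simpa [dotProduct, hui, sq] using this
    have hjj : uj ⬝ᵥ uj = 1 := by
      have h1 := horth.1 j
      have : (inner ℝ (hHerm.eigenvectorBasis j) (hHerm.eigenvectorBasis j) : ℝ) = 1 := by
        rw [real_inner_self_eq_norm_sq, h1]; norm_num
      rw [PiLp.inner_apply] at this
      simpa [dotProduct, huj, sq] using this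
    have hij0 : ui ⬝ᵥ uj = 0 := by
      have h0 : (inner ℝ (hHerm.eigenvectorBasis i) (hHerm.eigenvectorBasis j) : ℝ) = 0 :=
        horth.2 hij
      rw [PiLp.inner_apply] at h0
      simpa [dotProduct, hui, huj, mul_comm] using h0
    have hji0 : uj ⬝ᵥ ui = 0 := by
      rw [dotProduct_comm]; exact hij0
    -- weight functional
    set W : Fin n → ℝ := SplusAux.w n with hW
    set α : ℝ := ∑ v, W v * uj v with hα
    set β : ℝ := -(∑ v, W v * ui v) with hβ
    -- candidate vector
    by_cases hcase : (∑ v, W v * ui v) = 0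
    · -- use x = ui
      have hx0 : ui ≠ 0 := by
        intro h
        rw [h] at hii
        simp [dotProduct] at hii
      have := SplusAux.quad_neg hn ui hx0 hcase
      rw [← hD] at this
      have hquad : ui ⬝ᵥ (D *ᵥ ui) = hHerm.eigenvalues i := by
        rw [hmuli, dotProduct_smul, hii, smul_eq_mul, mul_one]
      rw [hquad, hii] at this
      linarith
    · set x : Fin n → ℝ := α • ui + β • uj with hxdef
      have hwx : (∑ v, W v * x v) = 0 := by
        have : ∀ v : Fin n, W v * x v = α * (W v * ui v) + β * (W v * uj v) := by
          intro v; simp [hxdef]; ring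
        rw [Finset.sum_congr rfl (fun v _ => this v), Finset.sum_add_distrib,
          ← Finset.mul_sum, ← Finset.mul_sum]
        simp only [hα, hβ]
        ring
      have hxx : x ⬝ᵥ x = α ^ 2 + β ^ 2 := by
        simp only [hxdef, add_dotProduct, dotProduct_add,
          smul_dotProduct, dotProduct_smul, smul_eq_mul,
          hii, hjj, hij0, hji0]
        ring
      have hβ0 : β ≠ 0 := by
        simp only [hβ, ne_eq, neg_eq_zero]
        exact hcase
      have hx0 : x ≠ 0 := by
        intro h
        rw [h] at hxx
        simp [dotProduct] at hxx
        have hb2 : 0 < β ^ 2 := by positivity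
        nlinarith [sq_nonneg α]
      have hDx : x ⬝ᵥ (D *ᵥ x) =
          α ^ 2 * hHerm.eigenvalues i + β ^ 2 * hHerm.eigenvalues j := by
        have hmx : D *ᵥ x = α • (hHerm.eigenvalues i • ui) + β • (hHerm.eigenvalues j • uj) := by
          rw [hxdef, Matrix.mulVec_add, Matrix.mulVec_smul, Matrix.mulVec_smul, hmuli, hmulj]
        rw [hmx]
        simp only [hxdef, add_dotProduct, dotProduct_add,
          smul_dotProduct, dotProduct_smul, smul_eq_mul,
          hii, hjj, hij0, hji0]
        ring
      have hneg := SplusAux.quad_neg hn x hx0 hwx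
      rw [← hD, hDx, hxx] at hneg
      have hb2 : 0 < β ^ 2 := by positivity
      nlinarith [sq_nonneg α]
  -- translate to the sorted list
  rw [lambda2, kthLargestEig, dif_pos hHerm]
  set m : Multiset ℝ := Finset.univ.val.map hHerm.eigenvalues with hm
  set l : List ℝ := m.sort (· ≤ ·) with hl
  have hlen : l.length = n := by
    rw [hl, Multiset.length_sort, hm, Multiset.card_map]
    simp
  have hcard : Fintype.card (Fin n) = n := Fintype.card_fin n
  rw [hcard]
  by_contra hcon
  push_neg at hcon
  -- hcon : -1/2 ≤ l.getD (n-2) 0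
  have hi2 : n - 2 < l.length := by omega
  have hi1 : n - 1 < l.length := by omega
  have hsorted : l.Pairwise (· ≤ ·) := Multiset.pairwise_sort _ _
  have hgd : l.getD (n - 2) 0 = l.get ⟨n - 2, hi2⟩ := by
    rw [List.getD_eq_getElem l 0 hi2]
    simp
  rw [hgd] at hcon
  have h21 : l.get ⟨n - 2, hi2⟩ ≤ l.get ⟨n - 1, hi1⟩ := by
    apply hsorted.rel_get_of_lt
    simp only [Fin.mk_lt_mk]
    omega
  -- count elements ≥ -1/2
  have hcount : 2 ≤ Multiset.countP (fun t : ℝ => -1/2 ≤ t) m := by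
    have hcoe : (l : Multiset ℝ) = m := Multiset.sort_eq _ _
    rw [← hcoe, Multiset.coe_countP]
    have hsplit : l = l.take (n - 2) ++ l.drop (n - 2) := (List.take_append_drop _ _).symm
    rw [hsplit, List.countP_append]
    have hdroplen : (l.drop (n - 2)).length = 2 := by
      rw [List.length_drop, hlen]; omega
    have hall : ∀ t ∈ l.drop (n - 2), -1/2 ≤ t := by
      intro t ht
      rw [List.mem_iff_getElem] at ht
      obtain ⟨k, hk, rfl⟩ := ht
      rw [List.getElem_drop]
      have hk2 : k < 2 := by rw [hdroplen] at hk; exact hk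
      have hle : l.get ⟨n - 2, hi2⟩ ≤ l[n - 2 + k] := by
        rcases Nat.eq_zero_or_pos k with rfl | hkpos
        · simp [List.get_eq_getElem]
        · have : l.get ⟨n - 2, hi2⟩ ≤ l.get ⟨n - 2 + k, by omega⟩ := by
            apply hsorted.rel_get_of_lt
            simp only [Fin.mk_lt_mk]
            omega
          simpa [List.get_eq_getElem] using this
      linarith
    have hc2 : (l.drop (n - 2)).countP (fun t : ℝ => decide (-1/2 ≤ t))
        = (l.drop (n - 2)).length :=
      List.countP_eq_length.mpr (fun t ht => decide_eq_true (hall t ht))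
    rw [hc2, hdroplen]
    omega
  rw [hm, Multiset.countP_map] at hcount
  have hcard2 : 2 ≤ (Finset.univ.filter (fun i : Fin n => -1/2 ≤ hHerm.eigenvalues i)).card := by
    have : (Finset.univ.filter (fun i : Fin n => -1/2 ≤ hHerm.eigenvalues i)).card
        = Multiset.card (Finset.univ.val.filter (fun i : Fin n => -1/2 ≤ hHerm.eigenvalues i)) := by
      rw [Finset.card_def, Finset.filter_val]
    rw [this]
    exact hcount
  have := Finset.one_lt_card.mp (by omega : 1 < (Finset.univ.filter
      (fun i : Fin n => -1/2 ≤ hHerm.eigenvalues i)).card)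
  obtain ⟨i, hi, j, hj, hij⟩ := this
  rw [Finset.mem_filter] at hi hj
  exact key i j hij hi.2 hj.2
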